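/- Let c be a real number with 0 ≤ c < 1 and n a positive integer, and let G be the n×n real symmetric matrix with entries G_{ij} = c^{|i−j|}. Then every eigenvalue λ of G satisfies (1−c)/(1+c) ≤ λ ≤ (1+c)/(1−c). In particular G is positive definite. -/

import Mathlib

open Matrix BigOperators Finset

/-- Auxiliary partial "smoothed" sums: `sAux c x k = ∑_{j<k} c^(k-1-j) x j`. -/
noncomputable def sAux (c : ℝ) (x : ℕ → ℝ) : ℕ → ℝ
  | 0 => 0
  | k + 1 => c * sAux c x k + x k

lemma csAux_eq (c : ℝ) (x : ℕ → ℝ) :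
    ∀ n, c * sAux c x n = ∑ j ∈ range n, c ^ (n - j) * x j := by
  intro n
  induction n with
  | zero => simp [sAux]
  | succ n ih =>
    rw [sum_range_succ, show (n + 1) - n = 1 from by omega, pow_one]
    have h : c * sAux c x (n + 1) = c * (c * sAux c x n) + c * x n := by
      simp [sAux]; ring
    rw [h, ih, mul_sum]
    congr 1
    refine sum_congr rfl fun j hj => ?_
    have hj' : j < n := mem_range.mp hj
    rw [show (n + 1) - j = (n - j) + 1 from by omega, pow_succ]
    ring

lemma quad_eq (c : ℝ) (x : ℕ → ℝ) :
    ∀ n, ∑ i ∈ range n, ∑ j ∈ range n, c ^ Nat.dist i j * x i * x j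
      = (1 - c ^ 2) * (∑ k ∈ range n, (sAux c x (k + 1)) ^ 2)
        + c ^ 2 * (sAux c x n) ^ 2 := by
  intro n
  induction n with
  | zero => simp [sAux]
  | succ n ih =>
    have h1 : ∀ i, ∑ j ∈ range (n + 1), c ^ Nat.dist i j * x i * x j
        = (∑ j ∈ range n, c ^ Nat.dist i j * x i * x j)
          + c ^ Nat.dist i n * x i * x n := fun i => sum_range_succ _ n
    simp only [h1]
    rw [sum_add_distrib]
    have hc1 : ∑ j ∈ range n, c ^ Nat.dist n j * x n * x j
        = c * sAux c x n * x n := by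
      rw [csAux_eq, sum_mul]
      refine sum_congr rfl fun j hj => ?_
      have hj' : j < n := mem_range.mp hj
      rw [Nat.dist_eq_sub_of_le_right hj'.le]
      ring
    have hc2 : ∑ i ∈ range n, c ^ Nat.dist i n * x i * x n
        = c * sAux c x n * x n := by
      rw [csAux_eq, sum_mul]
      refine sum_congr rfl fun j hj => ?_
      have hj' : j < n := mem_range.mp hj
      rw [Nat.dist_eq_sub_of_le hj'.le]
    rw [sum_range_succ (fun i => ∑ j ∈ range n, c ^ Nat.dist i j * x i * x j) n,
      sum_range_succ (fun i => c ^ Nat.dist i n * x i * x n) n,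
      hc1, hc2, ih, Nat.dist_self, pow_zero]
    rw [sum_range_succ, show sAux c x (n + 1) = c * sAux c x n + x n from rfl]
    ring

lemma lower_aux (c : ℝ) (hc0 : 0 ≤ c) (x : ℕ → ℝ) :
    ∀ n, (∑ k ∈ range n, (x k) ^ 2) + (c + c ^ 2) * (sAux c x n) ^ 2
      ≤ (1 + c) ^ 2 * ∑ k ∈ range n, (sAux c x (k + 1)) ^ 2 := by
  intro n
  induction n with
  | zero => simp [sAux]
  | succ n ih =>
    rw [sum_range_succ, sum_range_succ, mul_add,
      show sAux c x (n + 1) = c * sAux c x n + x n from rfl]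
    nlinarith [ih, mul_nonneg hc0 (sq_nonneg (x n + (1 + c) * sAux c x n))]

lemma upper_aux (c : ℝ) (hc0 : 0 ≤ c) (x : ℕ → ℝ) :
    ∀ n, (1 - c) ^ 2 * (∑ k ∈ range n, (sAux c x (k + 1)) ^ 2)
        + c * (1 - c) * (sAux c x n) ^ 2
      ≤ ∑ k ∈ range n, (x k) ^ 2 := by
  intro n
  induction n with
  | zero => simp [sAux]
  | succ n ih =>
    rw [sum_range_succ, sum_range_succ, mul_add,
      show sAux c x (n + 1) = c * sAux c x n + x n from rfl]
    nlinarith [ih, mul_nonneg hc0 (sq_nonneg (x n - (1 - c) * sAux c x n))]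

lemma quad_bounds (c : ℝ) (hc0 : 0 ≤ c) (hc1 : c < 1) (x : ℕ → ℝ) (n : ℕ) :
    (1 - c) / (1 + c) * (∑ k ∈ range n, (x k) ^ 2)
      ≤ (∑ i ∈ range n, ∑ j ∈ range n, c ^ Nat.dist i j * x i * x j)
    ∧ (∑ i ∈ range n, ∑ j ∈ range n, c ^ Nat.dist i j * x i * x j)
      ≤ (1 + c) / (1 - c) * (∑ k ∈ range n, (x k) ^ 2) := by
  have h1c : (0:ℝ) < 1 - c := by linarith
  have h1c' : (0:ℝ) < 1 + c := by linarith
  have hQ := quad_eq c x n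
  have hL := lower_aux c hc0 x n
  have hU := upper_aux c hc0 x n
  have hs2 : (0:ℝ) ≤ (sAux c x n) ^ 2 := sq_nonneg _
  constructor
  · rw [hQ, div_mul_eq_mul_div, div_le_iff₀ h1c']
    nlinarith [mul_le_mul_of_nonneg_left hL h1c.le,
      mul_nonneg (mul_nonneg hc0 hc0) hs2, mul_nonneg hc0 hs2]
  · rw [hQ, div_mul_eq_mul_div, le_div_iff₀ h1c]
    nlinarith [mul_le_mul_of_nonneg_left hU h1c'.le,
      mul_nonneg (mul_nonneg hc0 hc0) hs2, mul_nonneg hc0 hs2]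

/-- every eigenvalue of the Gram matrix `G_{ij} = c^{|i−j|}` lies in the
interval `[(1−c)/(1+c), (1+c)/(1−c)]`; in particular `G` is positive definite. -/
theorem gram_eigenvalue_bounds
    (c : ℝ) (hc0 : 0 ≤ c) (hc1 : c < 1) (n : ℕ) (hn : 0 < n)
    (G : Matrix (Fin n) (Fin n) ℝ)
    (hGdef : ∀ i j, G i j = c ^ Nat.dist i.1 j.1) :
    (∀ μ ∈ spectrum ℝ G, (1 - c) / (1 + c) ≤ μ ∧ μ ≤ (1 + c) / (1 - c)) ∧
      G.PosDef := by
  have h1c : (0:ℝ) < 1 - c := by linarith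
  have h1c' : (0:ℝ) < 1 + c := by linarith
  have key : ∀ v : Fin n → ℝ,
      (1 - c) / (1 + c) * (∑ i, v i ^ 2) ≤ v ⬝ᵥ G.mulVec v
      ∧ v ⬝ᵥ G.mulVec v ≤ (1 + c) / (1 - c) * (∑ i, v i ^ 2) := by
    intro v
    set x : ℕ → ℝ := fun k => if h : k < n then v ⟨k, h⟩ else 0 with hx
    have hsum : (∑ i, v i ^ 2) = ∑ k ∈ range n, (x k) ^ 2 := by
      rw [← Fin.sum_univ_eq_sum_range (fun k => (x k) ^ 2) n]
      refine sum_congr rfl fun i _ => ?_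
      simp [hx, i.isLt]
    have hquad : v ⬝ᵥ G.mulVec v
        = ∑ i ∈ range n, ∑ j ∈ range n, c ^ Nat.dist i j * x i * x j := by
      have h0 : v ⬝ᵥ G.mulVec v
          = ∑ i : Fin n, ∑ j : Fin n, c ^ Nat.dist i.1 j.1 * v i * v j := by
        simp only [dotProduct, mulVec, Finset.mul_sum]
        refine sum_congr rfl fun i _ => sum_congr rfl fun j _ => ?_
        rw [hGdef]; ring
      rw [h0,
        ← Fin.sum_univ_eq_sum_range
          (fun i => ∑ j ∈ range n, c ^ Nat.dist i j * x i * x j) n]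
      refine sum_congr rfl fun i _ => ?_
      rw [← Fin.sum_univ_eq_sum_range (fun j => c ^ Nat.dist i.1 j * x i.1 * x j) n]
      refine sum_congr rfl fun j _ => ?_
      simp [hx, i.isLt, j.isLt]
    rw [hsum, hquad]
    exact quad_bounds c hc0 hc1 x n
  have hpossum : ∀ v : Fin n → ℝ, v ≠ 0 → 0 < ∑ i, v i ^ 2 := by
    intro v hv
    obtain ⟨i, hi⟩ := Function.ne_iff.mp hv
    exact sum_pos' (fun _ _ => sq_nonneg _)
      ⟨i, mem_univ i, sq_pos_of_ne_zero hi⟩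
  constructor
  · intro μ hμ
    rw [spectrum.mem_iff, Matrix.isUnit_iff_isUnit_det, isUnit_iff_ne_zero, not_not] at hμ
    obtain ⟨v, hv0, hv⟩ := (Matrix.exists_mulVec_eq_zero_iff).mpr hμ
    have hGv : G.mulVec v = μ • v := by
      rw [Matrix.sub_mulVec] at hv
      have h2 : (algebraMap ℝ (Matrix (Fin n) (Fin n) ℝ) μ).mulVec v = μ • v := by
        rw [Algebra.algebraMap_eq_smul_one, Matrix.smul_mulVec, Matrix.one_mulVec]
      rw [h2] at hv
      linear_combination (norm := module) -hv
    have hdot : v ⬝ᵥ G.mulVec v = μ * ∑ i, v i ^ 2 := by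
      rw [hGv, dotProduct_smul, smul_eq_mul]
      congr 1
      simp [dotProduct, sq]
    have hS : 0 < ∑ i, v i ^ 2 := hpossum v hv0
    obtain ⟨hlo, hhi⟩ := key v
    rw [hdot] at hlo hhi
    exact ⟨le_of_mul_le_mul_right hlo hS, le_of_mul_le_mul_right hhi hS⟩
  · rw [Matrix.posDef_iff_dotProduct_mulVec]
    constructor
    · show Gᴴ = G
      ext i j
      rw [conjTranspose_apply, star_trivial, hGdef, hGdef, Nat.dist_comm]
    · intro v hv
      have hS : 0 < ∑ i, v i ^ 2 := hpossum v hv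
      have hlo := (key v).1
      have : (0:ℝ) < (1 - c) / (1 + c) * (∑ i, v i ^ 2) :=
        mul_pos (div_pos h1c h1c') hS
      calc (0:ℝ) < (1 - c) / (1 + c) * (∑ i, v i ^ 2) := this
        _ ≤ v ⬝ᵥ G.mulVec v := hlo
        _ = dotProduct (star v) (G *ᵥ v) := by simp
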